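/- Let G, A, B, C be groups and let α : G → A, β : G → B, α' : B → C, β' : A → C be group homomorphisms with β surjective, α' surjective, and β' ∘ α = α' ∘ β. Suppose a, b ∈ G satisfy: ker α is generated by a, ker β is generated by b, ker α' is generated by β(a), and ker β' is generated by α(b). Then the common composite π := β' ∘ α = α' ∘ β is surjective and its kernel equals the subgroup of G generated by {a, b}. -/
import Mathlib


/-- Abstraction of the commutative diagram (3.1): the common composite is surjective with
kernel generated by `{a, b}`. -/
theorem stmt_16 {G A B C : Type*} [Group G] [Group A] [Group B] [Group C]
    (α : G →* A) (β : G →* B) (α' : B →* C) (β' : A →* C)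
    (hβ : Function.Surjective β) (hα' : Function.Surjective α')
    (hcomm : β'.comp α = α'.comp β)
    (a b : G)
    (hkα : α.ker = Subgroup.zpowers a)
    (hkβ : β.ker = Subgroup.zpowers b)
    (hkα' : α'.ker = Subgroup.zpowers (β a))
    (hkβ' : β'.ker = Subgroup.zpowers (α b)) :
    Function.Surjective (β'.comp α) ∧
      (β'.comp α).ker = Subgroup.closure ({a, b} : Set G) := by
  have ha : a ∈ α.ker := hkα ▸ Subgroup.mem_zpowers a
  have hb : b ∈ β.ker := hkβ ▸ Subgroup.mem_zpowers b
  constructor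
  · rw [hcomm]
    exact hα'.comp hβ
  · apply le_antisymm
    · intro g hg
      rw [MonoidHom.mem_ker, hcomm, MonoidHom.comp_apply, ← MonoidHom.mem_ker, hkα'] at hg
      obtain ⟨n, hn⟩ := hg
      dsimp only at hn
      have : g * (a ^ n)⁻¹ ∈ β.ker := by
        rw [MonoidHom.mem_ker, map_mul, map_inv, map_zpow, hn, mul_inv_cancel]
      rw [hkβ] at this
      obtain ⟨m, hm⟩ := this
      dsimp only at hm
      have hga : g = b ^ m * a ^ n := by
        rw [hm]; group
      rw [hga]
      exact mul_mem (Subgroup.zpow_mem _ (Subgroup.subset_closure (by simp)) m)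
        (Subgroup.zpow_mem _ (Subgroup.subset_closure (by simp)) n)
    · rw [Subgroup.closure_le]
      rintro x (rfl | rfl)
      · simp [MonoidHom.mem_ker, MonoidHom.mem_ker.mp ha]
      · rw [SetLike.mem_coe, MonoidHom.mem_ker, hcomm, MonoidHom.comp_apply,
          MonoidHom.mem_ker.mp hb, map_one]
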